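/- Let R be a UFD, I a nonzero ideal with k = gcd(I) ≠ 0 a nonunit, and let b̂ ∈ R/I be a nonzero principal element. Then either the image of the relative prime part r is invertible in R/I for every I-pre-image r·δ of b̂, or this image is invertible for no I-pre-image of b̂. -/

import Mathlib

open UniqueFactorizationMonoid in
/-- If every prime factor of `k` divides `k'`, then `k` divides some power of `k'`. -/
lemma aux_pow_dvd {R : Type*} [CommRing R] [IsDomain R] [UniqueFactorizationMonoid R]
    {k k' : R} (hk0 : k ≠ 0) (h : ∀ p : R, Prime p → p ∣ k → p ∣ k') :
    ∃ N : ℕ, 1 ≤ N ∧ k ∣ k' ^ N := by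
  have hprod : Associated (Multiset.prod (factors k)) k := factors_prod hk0
  refine ⟨Multiset.card (factors k) + 1, Nat.le_add_left 1 _, ?_⟩
  have key : ∀ s : Multiset R, (∀ p ∈ s, p ∣ k') → s.prod ∣ k' ^ Multiset.card s := by
    intro s
    induction s using Multiset.induction with
    | empty => simp
    | cons a t ih =>
      intro hs
      rw [Multiset.prod_cons, Multiset.card_cons, pow_succ, mul_comm (k' ^ _) k']
      exact mul_dvd_mul (hs a (Multiset.mem_cons_self a t))
        (ih fun p hp => hs p (Multiset.mem_cons_of_mem hp))
  have h1 : (factors k).prod ∣ k' ^ Multiset.card (factors k) := by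
    refine key _ fun p hp => h p (prime_of_factor p hp) ?_
    exact (dvd_of_mem_factors hp)
  calc k ∣ (factors k).prod := hprod.symm.dvd
    _ ∣ k' ^ Multiset.card (factors k) := h1
    _ ∣ k' ^ (Multiset.card (factors k) + 1) := pow_dvd_pow _ (Nat.le_succ _)

theorem stmt12 {R : Type*} [CommRing R] [IsDomain R] [UniqueFactorizationMonoid R]
    (I : Ideal R) (hI : I ≠ ⊥) (k : R) (hk0 : k ≠ 0) (hku : ¬ IsUnit k)
    (hk : (∀ a ∈ I, k ∣ a) ∧ ∀ d : R, (∀ a ∈ I, d ∣ a) → d ∣ k)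
    (b : R) (hb : Ideal.Quotient.mk I b ≠ 0)
    (δ k' : R)
    (hδgcd : δ ∣ b ∧ δ ∣ k ∧ ∀ d : R, d ∣ b → d ∣ k → d ∣ δ)
    (hkk' : k = δ * k')
    (hprincipal : ∀ p : R, Prime p → p ∣ k → p ∣ k') :
    (∀ r d : R, Ideal.Quotient.mk I (r * d) = Ideal.Quotient.mk I b →
        (∀ e : R, e ∣ r → e ∣ k → IsUnit e) → (d = 0 ∨ d ∣ k) →
        IsUnit (Ideal.Quotient.mk I r)) ∨
    (∀ r d : R, Ideal.Quotient.mk I (r * d) = Ideal.Quotient.mk I b →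
        (∀ e : R, e ∣ r → e ∣ k → IsUnit e) → (d = 0 ∨ d ∣ k) →
        ¬ IsUnit (Ideal.Quotient.mk I r)) := by
  classical
  -- basic facts
  have hδ0 : δ ≠ 0 := fun h => hk0 (by rw [hkk', h, zero_mul])
  have hk'0 : k' ≠ 0 := fun h => hk0 (by rw [hkk', h, mul_zero])
  -- any pre-image has d associated to δ
  have hassoc : ∀ r d : R, Ideal.Quotient.mk I (r * d) = Ideal.Quotient.mk I b →
      (∀ e : R, e ∣ r → e ∣ k → IsUnit e) → (d = 0 ∨ d ∣ k) → Associated d δ := by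
    intro r d hrd hcop hd
    have hd' : d ∣ k := by
      rcases hd with h0 | h
      · exfalso; apply hb; rw [← hrd, h0, mul_zero, map_zero]
      · exact h
    have hmem : r * d - b ∈ I := by
      rwa [← Ideal.Quotient.mk_eq_mk_iff_sub_mem]
    have hkdvd : k ∣ r * d - b := hk.1 _ hmem
    -- d ∣ δ
    have hdb : d ∣ b := by
      have : d ∣ r * d - b := hd'.trans hkdvd
      have h2 : d ∣ r * d := Dvd.intro_left r rfl
      have := dvd_sub h2 this
      simpa using this
    have h1 : d ∣ δ := hδgcd.2.2 d hdb hd'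
    -- δ ∣ d
    have hδrd : δ ∣ r * d := by
      have : δ ∣ r * d - b := hδgcd.2.1.trans hkdvd
      have := dvd_add this hδgcd.1
      simpa using this
    have h2 : δ ∣ d :=
      UniqueFactorizationMonoid.dvd_of_dvd_mul_right_of_no_prime_factors hδ0
        (fun {e} heδ her hp => hp.not_unit (hcop e her (heδ.trans hδgcd.2.1))) hδrd
    exact associated_of_dvd_dvd h1 h2
  rw [or_iff_not_imp_right]
  intro hnr
  push_neg at hnr
  obtain ⟨r₀, d₀, hrd₀, hcop₀, hd₀, hu₀⟩ := hnr
  intro r d hrd hcop hd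
  -- d = u * d₀ for a unit u
  obtain ⟨u, hu⟩ := ((hassoc r₀ d₀ hrd₀ hcop₀ hd₀).trans (hassoc r d hrd hcop hd).symm)
  -- d₀ = v * δ
  obtain ⟨v, hv⟩ := hassoc r₀ d₀ hrd₀ hcop₀ hd₀
  -- inverse s of r₀
  obtain ⟨s, hs⟩ := Ideal.Quotient.mk_surjective ((hu₀.unit⁻¹ : (R ⧸ I)ˣ) : R ⧸ I)
  have hs1 : Ideal.Quotient.mk I (r₀ * s) = 1 := by
    rw [map_mul, hs]
    exact_mod_cast hu₀.unit.mul_inv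
  -- d₀ * (1 - s * r * u) ∈ I
  have hd₀0 : d₀ ≠ 0 := fun h => hδ0 (by rw [← hv, h, zero_mul])
  have hmem : d₀ * (1 - s * (r * ↑u)) ∈ I := by
    have e1 : Ideal.Quotient.mk I (d₀ * (1 - s * (r * ↑u))) = 0 := by
      have hb2 : Ideal.Quotient.mk I (r * d) = Ideal.Quotient.mk I (r₀ * d₀) := by
        rw [hrd, hrd₀]
      calc Ideal.Quotient.mk I (d₀ * (1 - s * (r * ↑u)))
          = Ideal.Quotient.mk I d₀ - Ideal.Quotient.mk I s * Ideal.Quotient.mk I (r * (d₀ * ↑u)) := by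
            push_cast [map_mul, map_sub, map_one]; ring
        _ = Ideal.Quotient.mk I d₀ - Ideal.Quotient.mk I s * Ideal.Quotient.mk I (r₀ * d₀) := by
            rw [hu, hb2]
        _ = Ideal.Quotient.mk I d₀ * (1 - Ideal.Quotient.mk I (r₀ * s)) := by
            push_cast [map_mul]; ring
        _ = 0 := by rw [hs1]; ring
    rwa [← Ideal.Quotient.eq_zero_iff_mem]
  obtain ⟨c, hc⟩ : k ∣ d₀ * (1 - s * (r * ↑u)) := hk.1 _ hmem
  -- cancel d₀: 1 - s r u = k' * (v * c)
  set y : R := (↑v : R) * c with hydef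
  have heq : 1 - s * (r * ↑u) = k' * y := by
    apply mul_left_cancel₀ hd₀0
    calc d₀ * (1 - s * (r * ↑u)) = k * c := hc
      _ = d₀ * (k' * y) := by rw [hkk', ← hv, hydef]; ring
  have hky : k * y ∈ I := by
    have : k * y = (↑v : R) * (d₀ * (1 - s * (r * ↑u))) := by
      rw [heq, hkk', ← hv]; ring
    rw [this]
    exact Ideal.mul_mem_left I _ hmem
  obtain ⟨N, hN1, hdvd⟩ := aux_pow_dvd hk0 hprincipal
  obtain ⟨w, hw⟩ := hdvd
  have hpowmem : (k' * y) ^ N ∈ I := by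
    obtain ⟨M, hM⟩ := Nat.exists_eq_add_of_le hN1
    have e : (k' * y) ^ N = (k * y) * (w * y ^ M) := by
      rw [mul_pow, hw, hM]; ring
    rw [e]
    exact Ideal.mul_mem_right _ I hky
  have hgeom : (1 - k' * y) * (Finset.range N).sum (fun i => (k' * y) ^ i)
      = 1 - (k' * y) ^ N := by
    have h2 : (1 - k' * y) * (Finset.range N).sum (fun i => (k' * y) ^ i)
        = -(((Finset.range N).sum (fun i => (k' * y) ^ i)) * ((k' * y) - 1)) := by ring
    rw [h2, geom_sum_mul]; ring
  have hfinal : Ideal.Quotient.mk I ((s * (r * ↑u)) * (Finset.range N).sum (fun i => (k' * y) ^ i)) = 1 := by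
    have h1 : s * (r * ↑u) = 1 - k' * y := by rw [← heq]; ring
    rw [h1, hgeom, map_sub, map_one, Ideal.Quotient.eq_zero_iff_mem.mpr hpowmem, sub_zero]
  refine IsUnit.of_mul_eq_one (Ideal.Quotient.mk I (s * ↑u * (Finset.range N).sum (fun i => (k' * y) ^ i))) ?_
  rw [← map_mul, ← hfinal]
  congr 1
  ring
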